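/- Let G* be the free monoid on a pseudo-Garside germ's group G, with the rewriting relation → generated by u(a)(b*c)v → u(a*b)(c)v whenever a*b and b*c are defined. Then → satisfies the diamond property: if u → v and u → w, there exists x with v → x and w → x. -/
import Mathlib


/-- A pseudo-Garside germ `(G, H, ≤, w₀)`: groups `H ⊆ G`, a lattice order on
`G/H` (encoded by the preorder `lesim` on `G`, writing `a ≲ b` for `aH ≤ bH`)
with least element `H` and greatest element `w₀H`, satisfying (PG2) and (PG3).
`a*b` is defined (and equals `ab`) iff `lesim a (a*b)`. -/
structure PseudoGarsideGerm (G : Type*) [Group G] where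
  H : Subgroup G
  lesim : G → G → Prop
  w₀ : G
  refl : ∀ a, lesim a a
  trans : ∀ a b c, lesim a b → lesim b c → lesim a c
  /-- `≤` is antisymmetric as an order on cosets. -/
  antisymm : ∀ a b, lesim a b → lesim b a → a⁻¹ * b ∈ H
  /-- `lesim` only depends on the cosets. -/
  coset_congr : ∀ a b h h', h ∈ H → h' ∈ H → lesim a b → lesim (a * h) (b * h')
  /-- `H` is the least element. -/
  least : ∀ a, lesim 1 a
  /-- `w₀H` is the greatest element. -/
  greatest : ∀ a, lesim a w₀
  /-- Any two cosets have a join. -/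
  sup_exists : ∀ a b, ∃ d, lesim a d ∧ lesim b d ∧ ∀ e, lesim a e → lesim b e → lesim d e
  /-- Any two cosets have a meet. -/
  inf_exists : ∀ a b, ∃ d, lesim d a ∧ lesim d b ∧ ∀ e, lesim e a → lesim e b → lesim e d
  /-- (PG2): `(a*b)*c` is defined iff `a*(b*c)` is. -/
  pg2 : ∀ a b c, (lesim a (a * b) ∧ lesim (a * b) (a * b * c)) ↔
    (lesim b (b * c) ∧ lesim a (a * b * c))
  /-- (PG3): `a ≲ b` iff `w₀aw₀⁻¹ ≲ w₀bw₀⁻¹`. -/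
  pg3 : ∀ a b, lesim a b ↔ lesim (w₀ * a * w₀⁻¹) (w₀ * b * w₀⁻¹)

/-- The rewriting relation on the free monoid `G*` (words over `G`):
`u (a)(b*c) v → u (a*b)(c) v` whenever `a*b` and `b*c` are defined. -/
def GermRw {G : Type*} [Group G] (Γ : PseudoGarsideGerm G) (u v : List G) : Prop :=
  ∃ (p q : List G) (a b c : G), Γ.lesim a (a * b) ∧ Γ.lesim b (b * c) ∧
    u = p ++ [a, b * c] ++ q ∧ v = p ++ [a * b, c] ++ q

lemma germ_defined_iff {G : Type*} [Group G] (Γ : PseudoGarsideGerm G) (a b : G) :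
    Γ.lesim a (a * b) ↔ Γ.lesim b (a⁻¹ * Γ.w₀) := by
  have h := Γ.pg2 a b (b⁻¹ * a⁻¹ * Γ.w₀)
  rw [show a * b * (b⁻¹ * a⁻¹ * Γ.w₀) = Γ.w₀ by group,
      show b * (b⁻¹ * a⁻¹ * Γ.w₀) = a⁻¹ * Γ.w₀ by group] at h
  constructor
  · intro hab; exact (h.mp ⟨hab, Γ.greatest _⟩).1
  · intro hb; exact (h.mpr ⟨hb, Γ.greatest _⟩).1

lemma list_overlap {α : Type*} (p₁ : List α) :
    ∀ (p₂ q₁ q₂ : List α) (x₁ y₁ x₂ y₂ : α),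
    p₁ ++ [x₁, y₁] ++ q₁ = p₂ ++ [x₂, y₂] ++ q₂ → p₁.length ≤ p₂.length →
    (p₁ = p₂ ∧ x₁ = x₂ ∧ y₁ = y₂ ∧ q₁ = q₂) ∨
    (p₂ = p₁ ++ [x₁] ∧ x₂ = y₁ ∧ q₁ = y₂ :: q₂) ∨
    (∃ r, p₂ = p₁ ++ [x₁, y₁] ++ r ∧ q₁ = r ++ [x₂, y₂] ++ q₂) := by
  induction p₁ with
  | nil =>
    intro p₂ q₁ q₂ x₁ y₁ x₂ y₂ h _
    match p₂ with
    | [] => simp_all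
    | [z] =>
      simp only [List.nil_append, List.cons_append, List.cons.injEq] at h
      right; left
      obtain ⟨h1, h2, h3⟩ := h
      simp_all
    | z :: z' :: t =>
      simp only [List.nil_append, List.cons_append, List.cons.injEq] at h
      right; right
      exact ⟨t, by simp_all, by simp_all⟩
  | cons z t ih =>
    intro p₂ q₁ q₂ x₁ y₁ x₂ y₂ h hle
    match p₂ with
    | [] => simp at hle
    | z' :: t' =>
      simp only [List.cons_append, List.cons.injEq] at h
      obtain ⟨rfl, h⟩ := h
      rcases ih t' q₁ q₂ x₁ y₁ x₂ y₂ h (by simpa using hle) with h | h | ⟨r, h⟩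
      · left; simp_all
      · right; left; simp_all
      · right; right; exact ⟨r, by simp_all, by simp_all⟩

lemma stmt12_aux {G : Type*} [Group G] (Γ : PseudoGarsideGerm G) (u v w : List G)
    (p₁ q₁ : List G) (a₁ b₁ c₁ : G) (h₁ : Γ.lesim a₁ (a₁ * b₁)) (h₁' : Γ.lesim b₁ (b₁ * c₁))
    (hu₁ : u = p₁ ++ [a₁, b₁ * c₁] ++ q₁) (hv : v = p₁ ++ [a₁ * b₁, c₁] ++ q₁)
    (p₂ q₂ : List G) (a₂ b₂ c₂ : G) (h₂ : Γ.lesim a₂ (a₂ * b₂)) (h₂' : Γ.lesim b₂ (b₂ * c₂))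
    (hu₂ : u = p₂ ++ [a₂, b₂ * c₂] ++ q₂) (hw : w = p₂ ++ [a₂ * b₂, c₂] ++ q₂)
    (hle : p₁.length ≤ p₂.length) :
    ∃ x, GermRw Γ v x ∧ GermRw Γ w x := by
  rcases list_overlap p₁ p₂ q₁ q₂ a₁ (b₁ * c₁) a₂ (b₂ * c₂) (hu₁ ▸ hu₂) hle with
    ⟨rfl, rfl, hbc, rfl⟩ | ⟨rfl, hbc, rfl⟩ | ⟨r, rfl, rfl⟩
  · -- same position
    obtain ⟨d, hd₁, hd₂, hdle⟩ := Γ.sup_exists b₁ b₂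
    have hdbc : Γ.lesim d (b₁ * c₁) := hdle _ h₁' (hbc ▸ h₂')
    have had : Γ.lesim a₁ (a₁ * d) := by
      rw [germ_defined_iff]
      exact hdle _ ((germ_defined_iff Γ a₁ b₁).mp h₁) ((germ_defined_iff Γ a₁ b₂).mp h₂)
    refine ⟨p₁ ++ [a₁ * d, d⁻¹ * (b₁ * c₁)] ++ q₁, ?_, ?_⟩
    · refine ⟨p₁, q₁, a₁ * b₁, b₁⁻¹ * d, d⁻¹ * (b₁ * c₁), ?_, ?_, ?_, ?_⟩
      · exact ((Γ.pg2 a₁ b₁ (b₁⁻¹ * d)).mpr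
          ⟨by rw [show b₁ * (b₁⁻¹ * d) = d by group]; exact hd₁,
           by rw [show a₁ * b₁ * (b₁⁻¹ * d) = a₁ * d by group]; exact had⟩).2
      · exact ((Γ.pg2 b₁ (b₁⁻¹ * d) (d⁻¹ * (b₁ * c₁))).mp
          ⟨by rw [show b₁ * (b₁⁻¹ * d) = d by group]; exact hd₁,
           by rw [show b₁ * (b₁⁻¹ * d) = d by group,
                show d * (d⁻¹ * (b₁ * c₁)) = b₁ * c₁ by group]; exact hdbc⟩).1
      · rw [hv, show (b₁⁻¹ * d) * (d⁻¹ * (b₁ * c₁)) = c₁ by group]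
      · rw [show a₁ * b₁ * (b₁⁻¹ * d) = a₁ * d by group]
    · refine ⟨p₁, q₁, a₁ * b₂, b₂⁻¹ * d, d⁻¹ * (b₁ * c₁), ?_, ?_, ?_, ?_⟩
      · exact ((Γ.pg2 a₁ b₂ (b₂⁻¹ * d)).mpr
          ⟨by rw [show b₂ * (b₂⁻¹ * d) = d by group]; exact hd₂,
           by rw [show a₁ * b₂ * (b₂⁻¹ * d) = a₁ * d by group]; exact had⟩).2
      · exact ((Γ.pg2 b₂ (b₂⁻¹ * d) (d⁻¹ * (b₁ * c₁))).mp
          ⟨by rw [show b₂ * (b₂⁻¹ * d) = d by group]; exact hd₂,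
           by rw [show b₂ * (b₂⁻¹ * d) = d by group,
                show d * (d⁻¹ * (b₁ * c₁)) = b₁ * c₁ by group]; exact hdbc⟩).1
      · rw [hw, show (b₂⁻¹ * d) * (d⁻¹ * (b₁ * c₁)) = c₂ by rw [hbc]; group]
      · rw [show a₁ * b₂ * (b₂⁻¹ * d) = a₁ * d by group]
  · -- adjacent
    subst hbc
    have key := (Γ.pg2 b₁ c₁ b₂).mp ⟨h₁', h₂⟩
    refine ⟨p₁ ++ [a₁ * b₁, c₁ * b₂, c₂] ++ q₂, ?_, ?_⟩
    · refine ⟨p₁ ++ [a₁ * b₁], q₂, c₁, b₂, c₂, key.1, h₂', ?_, ?_⟩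
      · rw [hv]; simp
      · simp
    · refine ⟨p₁, c₂ :: q₂, a₁, b₁, c₁ * b₂, h₁, by rw [← mul_assoc]; exact key.2, ?_, ?_⟩
      · rw [hw]; simp [mul_assoc]
      · simp
  · -- disjoint
    refine ⟨p₁ ++ [a₁ * b₁, c₁] ++ r ++ [a₂ * b₂, c₂] ++ q₂, ?_, ?_⟩
    · refine ⟨p₁ ++ [a₁ * b₁, c₁] ++ r, q₂, a₂, b₂, c₂, h₂, h₂', ?_, ?_⟩
      · rw [hv]; simp
      · simp
    · refine ⟨p₁, r ++ [a₂ * b₂, c₂] ++ q₂, a₁, b₁, c₁, h₁, h₁', ?_, ?_⟩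
      · rw [hw]; simp
      · simp


/-- The rewriting relation satisfies the diamond property. -/
theorem stmt12 {G : Type*} [Group G] (Γ : PseudoGarsideGerm G) (u v w : List G)
    (huv : GermRw Γ u v) (huw : GermRw Γ u w) :
    ∃ x, GermRw Γ v x ∧ GermRw Γ w x := by
  obtain ⟨p₁, q₁, a₁, b₁, c₁, h₁, h₁', hu₁, hv⟩ := huv
  obtain ⟨p₂, q₂, a₂, b₂, c₂, h₂, h₂', hu₂, hw⟩ := huw
  rcases le_total p₁.length p₂.length with hle | hle
  · exact stmt12_aux Γ u v w p₁ q₁ a₁ b₁ c₁ h₁ h₁' hu₁ hv p₂ q₂ a₂ b₂ c₂ h₂ h₂' hu₂ hw hle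
  · obtain ⟨x, hx₁, hx₂⟩ :=
      stmt12_aux Γ u w v p₂ q₂ a₂ b₂ c₂ h₂ h₂' hu₂ hw p₁ q₁ a₁ b₁ c₁ h₁ h₁' hu₁ hv hle
    exact ⟨x, hx₂, hx₁⟩
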